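/- Define Ei(x) = ∫_{x}^{∞} e^{−v}/v dv for x > 0. For every real number p < 1/2, the function u ↦ u^{−2p}/(1 − log u)² is integrable on (0, 1), and ∫_{0}^{1} u^{−2p}/(1 − log u)² du = 1 − e^{1−2p}·(1 − 2p)·Ei(1 − 2p). -/

import Mathlib

open MeasureTheory Set Real Filter

/-- The exponential integral `Ei(x) = ∫_{x}^{∞} e^{−v}/v dv` (for `x > 0`). -/
noncomputable def Ei (x : ℝ) : ℝ := ∫ v in Set.Ioi x, Real.exp (-v) / v

lemma Ei_integrand_integrableOn {x : ℝ} (hx : 0 < x) :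
    IntegrableOn (fun v => Real.exp (-v) / v) (Set.Ioi x) := by
  have hg : IntegrableOn (fun v => Real.exp (-v) * x⁻¹) (Set.Ioi x) := by
    have := exp_neg_integrableOn_Ioi x (one_pos)
    simp only [neg_mul, one_mul] at this
    exact this.mul_const _
  refine hg.mono' ?_ ?_
  · exact ((Real.measurable_exp.comp measurable_neg).div measurable_id).aestronglyMeasurable
  · filter_upwards [ae_restrict_mem measurableSet_Ioi] with v hv
    have hv' : x < v := hv
    have hv0 : 0 < v := hx.trans hv'
    rw [Real.norm_eq_abs, abs_of_nonneg (by positivity), div_eq_mul_inv]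
    exact mul_le_mul_of_nonneg_left (by
      rw [inv_le_inv₀ hv0 hx]; exact hv'.le) (Real.exp_pos _).le

lemma Ei_split {x y : ℝ} (hx : 0 < x) (hxy : x ≤ y) :
    Ei x = (∫ v in Set.Ioc x y, Real.exp (-v) / v) + Ei y := by
  have hy : 0 < y := hx.trans_le hxy
  rw [Ei, Ei, ← Set.Ioc_union_Ioi_eq_Ioi hxy,
    setIntegral_union (Set.Ioc_disjoint_Ioi le_rfl) measurableSet_Ioi
      ((Ei_integrand_integrableOn hx).mono_set Set.Ioc_subset_Ioi_self)
      (Ei_integrand_integrableOn hy)]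

lemma Ei_eq_sub {x : ℝ} (hx : 0 < x) :
    Ei x = Ei 1 - ∫ t in (1:ℝ)..x, Real.exp (-t) / t := by
  rcases le_total 1 x with h | h
  · rw [intervalIntegral.integral_of_le h]
    have := Ei_split one_pos h
    linarith
  · rw [intervalIntegral.integral_symm, intervalIntegral.integral_of_le h]
    have := Ei_split hx h
    linarith

lemma hasDerivAt_Ei {x : ℝ} (hx : 0 < x) :
    HasDerivAt Ei (-(Real.exp (-x) / x)) x := by
  have hmin : 0 < min 1 x := lt_min one_pos hx
  have hint : IntervalIntegrable (fun t => Real.exp (-t) / t) volume 1 x := by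
    apply ContinuousOn.intervalIntegrable
    apply ContinuousOn.div
    · exact (Real.continuous_exp.comp continuous_neg).continuousOn
    · exact continuousOn_id
    · intro t ht
      have : min 1 x ≤ t := ht.1
      exact ne_of_gt (hmin.trans_le this)
  have hmeas : StronglyMeasurableAtFilter (fun t => Real.exp (-t) / t) (nhds x) volume :=
    ((Real.measurable_exp.comp measurable_neg).div measurable_id).stronglyMeasurable.stronglyMeasurableAtFilter
  have hcont : ContinuousAt (fun t => Real.exp (-t) / t) x :=
    ContinuousAt.div ((Real.continuous_exp.comp continuous_neg).continuousAt)
      continuousAt_id (ne_of_gt hx)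
  have hD : HasDerivAt (fun y => Ei 1 - ∫ t in (1:ℝ)..y, Real.exp (-t) / t)
      (-(Real.exp (-x) / x)) x := by
    exact (intervalIntegral.integral_hasDerivAt_right hint hmeas hcont).const_sub _
  apply hD.congr_of_eventuallyEq
  filter_upwards [isOpen_Ioi.mem_nhds hx] with y hy
  exact Ei_eq_sub hy

lemma Ei_nonneg {x : ℝ} (hx : 0 < x) : 0 ≤ Ei x := by
  apply setIntegral_nonneg measurableSet_Ioi
  intro v hv
  have : 0 < v := hx.trans hv
  positivity

lemma Ei_le_exp {x : ℝ} (hx : 1 ≤ x) : Ei x ≤ Real.exp (-x) := by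
  have hx0 : 0 < x := lt_of_lt_of_le one_pos hx
  rw [← integral_exp_neg_Ioi x]
  apply setIntegral_mono_on (Ei_integrand_integrableOn hx0)
    (by simpa using exp_neg_integrableOn_Ioi x one_pos) measurableSet_Ioi
  intro v hv
  have hv1 : 1 ≤ v := hx.trans (le_of_lt hv)
  rw [div_le_iff₀ (lt_of_lt_of_le one_pos hv1)]
  nlinarith [Real.exp_pos (-v)]

lemma tendsto_Ei_atTop : Tendsto Ei atTop (nhds 0) := by
  apply squeeze_zero' (g := fun x => Real.exp (-x))
  · filter_upwards [eventually_ge_atTop (1:ℝ)] with x hx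
    exact Ei_nonneg (lt_of_lt_of_le one_pos hx)
  · filter_upwards [eventually_ge_atTop (1:ℝ)] with x hx
    exact Ei_le_exp hx
  · exact Real.tendsto_exp_atBot.comp tendsto_neg_atTop_atBot

/-- For `p < 1/2`, the function `u ↦ u^{−2p}/(1 − log u)²` is integrable on `(0,1)` and
`∫_{0}^{1} u^{−2p}/(1 − log u)² du = 1 − e^{1−2p}·(1 − 2p)·Ei(1 − 2p)`. -/
theorem integral_rpow_div_one_sub_log_sq (p : ℝ) (hp : p < 1 / 2) :
    IntegrableOn (fun u : ℝ => u ^ (-(2 * p)) / (1 - Real.log u) ^ 2) (Set.Ioo 0 1) volume ∧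
      ∫ u in Set.Ioo 0 1, u ^ (-(2 * p)) / (1 - Real.log u) ^ 2
        = 1 - Real.exp (1 - 2 * p) * (1 - 2 * p) * Ei (1 - 2 * p) := by
  set a : ℝ := 1 - 2 * p with ha_def
  have ha : 0 < a := by rw [ha_def]; linarith
  -- the substitution map
  have himg : (fun t : ℝ => Real.exp (1 - t)) '' Set.Ioi 1 = Set.Ioo 0 1 := by
    ext y
    constructor
    · rintro ⟨t, ht, rfl⟩
      exact ⟨Real.exp_pos _, Real.exp_lt_one_iff.2 (by simpa using ht)⟩
    · rintro ⟨hy0, hy1⟩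
      refine ⟨1 - Real.log y, ?_, by
        show Real.exp (1 - (1 - Real.log y)) = y
        rw [sub_sub_cancel, Real.exp_log hy0]⟩
      have : Real.log y < 0 := Real.log_neg hy0 hy1
      simp only [Set.mem_Ioi]; linarith
  have hder : ∀ t ∈ Set.Ioi (1:ℝ),
      HasDerivWithinAt (fun t : ℝ => Real.exp (1 - t)) (-Real.exp (1 - t)) (Set.Ioi 1) t := by
    intro t _
    have h := ((hasDerivAt_id t).const_sub 1).exp
    simpa [mul_comm] using h.hasDerivWithinAt
  have hinj : Set.InjOn (fun t : ℝ => Real.exp (1 - t)) (Set.Ioi 1) := by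
    intro s _ t _ h
    have h2 : 1 - s = 1 - t := Real.exp_injective h
    linarith
  -- the transformed integrand
  have key : ∀ t ∈ Set.Ioi (1:ℝ),
      |(-Real.exp (1 - t))| •
        (Real.exp (1 - t) ^ (-(2 * p)) / (1 - Real.log (Real.exp (1 - t))) ^ 2)
      = Real.exp a * Real.exp (-(a * t)) / t ^ 2 := by
    intro t _
    rw [Real.rpow_def_of_pos (Real.exp_pos _), Real.log_exp,
      abs_neg, abs_of_pos (Real.exp_pos _), smul_eq_mul,
      show (1:ℝ) - (1 - t) = t by ring, ← mul_div_assoc, ← Real.exp_add, ← Real.exp_add]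
    congr 2
    rw [ha_def]; ring
  -- FTC on (1, ∞) for the transformed integrand
  set G : ℝ → ℝ := fun t => -(Real.exp a * (Real.exp (-(a * t)) / t)) + a * Real.exp a * Ei (a * t)
    with hG_def
  have hGderiv : ∀ t ∈ Set.Ici (1:ℝ),
      HasDerivAt G (Real.exp a * Real.exp (-(a * t)) / t ^ 2) t := by
    intro t ht
    have ht0 : (0:ℝ) < t := lt_of_lt_of_le one_pos ht
    have h1 : HasDerivAt (fun t : ℝ => Real.exp (-(a * t))) (-a * Real.exp (-(a * t))) t := by
      have := (((hasDerivAt_id t).const_mul a).neg).exp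
      simpa [mul_comm] using this
    have h2 : HasDerivAt (fun t : ℝ => Real.exp (-(a * t)) / t)
        ((-a * Real.exp (-(a * t)) * t - Real.exp (-(a * t)) * 1) / t ^ 2) t :=
      h1.div (hasDerivAt_id t) (ne_of_gt ht0)
    have hlin : HasDerivAt (fun t : ℝ => a * t) a t := by
      simpa using (hasDerivAt_id t).const_mul a
    have h3 : HasDerivAt (fun t : ℝ => Ei (a * t))
        (-(Real.exp (-(a * t)) / (a * t)) * a) t :=
      (hasDerivAt_Ei (show (0:ℝ) < a * t by positivity)).comp t hlin
    have h4 := ((h2.const_mul (Real.exp a)).neg).add (h3.const_mul (a * Real.exp a))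
    convert h4 using 1
    · rfl
    · rfl
    · rfl
    field_simp
    ring
  have hGcont : ContinuousWithinAt G (Set.Ici 1) 1 :=
    (hGderiv 1 Set.self_mem_Ici).continuousAt.continuousWithinAt
  have hpos : ∀ t ∈ Set.Ioi (1:ℝ), 0 ≤ Real.exp a * Real.exp (-(a * t)) / t ^ 2 := by
    intro t _; positivity
  have hmulTop : Tendsto (fun t : ℝ => a * t) atTop atTop :=
    Tendsto.const_mul_atTop ha tendsto_id
  have hGtend : Tendsto G atTop (nhds 0) := by
    have t1 : Tendsto (fun t : ℝ => Real.exp (-(a * t))) atTop (nhds 0) :=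
      Real.tendsto_exp_atBot.comp (tendsto_neg_atTop_atBot.comp hmulTop)
    have t2 : Tendsto (fun t : ℝ => Real.exp (-(a * t)) / t) atTop (nhds 0) := by
      have := t1.mul tendsto_inv_atTop_zero
      simpa [div_eq_mul_inv] using this
    have t3 : Tendsto (fun t : ℝ => Ei (a * t)) atTop (nhds 0) :=
      tendsto_Ei_atTop.comp hmulTop
    have := ((t2.const_mul (Real.exp a)).neg).add (t3.const_mul (a * Real.exp a))
    simpa using this
  have hint : IntegrableOn (fun t => Real.exp a * Real.exp (-(a * t)) / t ^ 2)
      (Set.Ioi 1) volume :=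
    integrableOn_Ioi_deriv_of_nonneg hGcont (fun t ht => hGderiv t (Set.mem_Ici.2 (le_of_lt ht))) hpos hGtend
  have hval : ∫ t in Set.Ioi 1, Real.exp a * Real.exp (-(a * t)) / t ^ 2 = 0 - G 1 :=
    integral_Ioi_of_hasDerivAt_of_nonneg hGcont (fun t ht => hGderiv t (Set.mem_Ici.2 (le_of_lt ht))) hpos hGtend
  constructor
  · rw [← himg]
    rw [integrableOn_image_iff_integrableOn_abs_deriv_smul measurableSet_Ioi hder hinj]
    exact (hint.congr_fun (fun t ht => (key t ht).symm) measurableSet_Ioi : _)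
  · rw [← himg,
      integral_image_eq_integral_abs_deriv_smul measurableSet_Ioi hder hinj,
      setIntegral_congr_fun measurableSet_Ioi key, hval, hG_def]
    simp only [mul_one, div_one]
    have h1 : Real.exp a * Real.exp (-a) = 1 := by rw [← Real.exp_add]; simp
    linear_combination h1
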